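/- arXiv:1708.06611 — 2 statements merged into one kernel-verified Lean document; each statement's English description precedes it below -/
import Mathlib

section
/- Let α, β₁, β₂ > 0 with α ≥ β₂. Then for all z > 0, ₁F₂(α; β₁+1, β₂; z)/₁F₂(α; β₁, β₂; z) + [₁F₂(α; β₁+1, β₂; z)]^{1/β₁} ≥ 2. -/
open Finset

namespace Wilker

/-- The coefficient of a ₁F₂-type series. -/
noncomputable def co (α β γ : ℝ) (k : ℕ) : ℝ :=
  (∏ i ∈ Finset.range k, (α + i)) /
    ((∏ i ∈ Finset.range k, (β + i)) * (∏ i ∈ Finset.range k, (γ + i)) * (k.factorial : ℝ))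

lemma prod_pos_of_pos {α : ℝ} (hα : 0 < α) (k : ℕ) : 0 < ∏ i ∈ Finset.range k, (α + i) :=
  Finset.prod_pos fun i _ => by positivity

lemma co_pos {α β γ : ℝ} (hα : 0 < α) (hβ : 0 < β) (hγ : 0 < γ) (k : ℕ) :
    0 < co α β γ k := by
  have := prod_pos_of_pos hα k
  have := prod_pos_of_pos hβ k
  have := prod_pos_of_pos hγ k
  have : (0:ℝ) < k.factorial := by positivity
  unfold co; positivity

lemma co_zero (α β γ : ℝ) : co α β γ 0 = 1 := by simp [co]

lemma co_succ {α β γ : ℝ} (hα : 0 < α) (hβ : 0 < β) (hγ : 0 < γ) (k : ℕ) :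
    co α β γ (k + 1) * ((β + k) * ((γ + k) * (k + 1))) = co α β γ k * (α + k) := by
  have h1 := prod_pos_of_pos hβ k
  have h2 := prod_pos_of_pos hγ k
  have h3 : (0:ℝ) < k.factorial := by positivity
  have hb : (0:ℝ) < β + k := by positivity
  have hg : (0:ℝ) < γ + k := by positivity
  unfold co
  rw [Finset.prod_range_succ, Finset.prod_range_succ, Finset.prod_range_succ,
    Nat.factorial_succ]
  push_cast
  field_simp

/-- The key three-term cross inequality, using `β₂ ≤ α`. -/
lemma cross {α β₁ β₂ a b : ℝ} (hα : 0 < α) (hβ₁ : 0 < β₁) (hβ₂ : 0 < β₂)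
    (hαβ : β₂ ≤ α) (ha : 0 ≤ a) (hab : a ≤ b) :
    (α + b) * ((β₁ + 1 + a) * (β₂ + a)) ≤ (α + a) * ((β₁ + 1 + b) * (β₂ + b)) := by
  nlinarith [mul_nonneg (mul_nonneg (sub_nonneg.2 hab) ha) (ha.trans hab),
    mul_nonneg (sub_nonneg.2 hab) (mul_nonneg ha (ha.trans hab)),
    mul_nonneg (sub_nonneg.2 hab) (mul_nonneg hα.le ha),
    mul_nonneg (sub_nonneg.2 hab) (mul_nonneg hα.le (ha.trans hab)),
    mul_nonneg (sub_nonneg.2 hab) (mul_nonneg (add_pos hβ₁ one_pos).le (sub_nonneg.2 hαβ)),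
    mul_nonneg (sub_nonneg.2 hab) (mul_nonneg hα.le hβ₂.le)]

/-- `tt k = b k * b (m-k)` where `b` is the coefficient sequence of g. -/
noncomputable def tt (α β₁ β₂ : ℝ) (m k : ℕ) : ℝ :=
  co α (β₁ + 1) β₂ k * co α (β₁ + 1) β₂ (m - k)

noncomputable def ss (α β₁ β₂ : ℝ) (m k : ℕ) : ℝ :=
  tt α β₁ β₂ m k / (m.choose k : ℝ)

section Comb
variable {α β₁ β₂ : ℝ} (hα : 0 < α) (hβ₁ : 0 < β₁) (hβ₂ : 0 < β₂) (hαβ : β₂ ≤ α)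

include hα hβ₁ hβ₂ in
lemma tt_pos (m k : ℕ) : 0 < tt α β₁ β₂ m k :=
  mul_pos (co_pos hα (by linarith) hβ₂ _) (co_pos hα (by linarith) hβ₂ _)

include hα hβ₁ hβ₂ hαβ in
lemma ss_step {m k : ℕ} (hk : 2 * k + 1 ≤ m) :
    ss α β₁ β₂ m k ≤ ss α β₁ β₂ m (k + 1) := by
  set b := co α (β₁ + 1) β₂ with hb
  have hβ₁' : (0:ℝ) < β₁ + 1 := by linarith
  obtain ⟨bb, hbb⟩ : ∃ bb, m - 1 - k = bb := ⟨_, rfl⟩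
  have hmk : m - k = bb + 1 := by omega
  have hmk1 : m - (k + 1) = bb := by omega
  have hkbb : k ≤ bb := by omega
  have hkm : k + 1 ≤ m := by omega
  have h1 := co_succ hα hβ₁' hβ₂ k
  have h2 := co_succ hα hβ₁' hβ₂ bb
  have hqrel : ((m.choose (k+1) : ℝ)) * (k+1) = (m.choose k : ℝ) * (bb+1) := by
    have := Nat.choose_succ_right_eq m k
    rw [hmk] at this
    exact_mod_cast this
  have hq0 : (0:ℝ) < (m.choose k : ℝ) := by
    exact_mod_cast Nat.choose_pos (by omega)
  have hq1 : (0:ℝ) < (m.choose (k+1) : ℝ) := by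
    exact_mod_cast Nat.choose_pos hkm
  have hbk := co_pos hα hβ₁' hβ₂ k
  have hbbb := co_pos hα hβ₁' hβ₂ bb
  unfold ss tt
  rw [hmk, hmk1, ← hb]
  rw [div_le_div_iff₀ hq0 hq1]
  set Dk : ℝ := (β₁ + 1 + k) * ((β₂ + k) * (k+1)) with hDk
  have hDkpos : 0 < Dk := by have : (0:ℝ) < (k:ℝ)+1 := by positivity
                             rw [hDk]; positivity
  set Db : ℝ := (β₁ + 1 + bb) * ((β₂ + bb) * (bb+1)) with hDb
  have hDbpos : 0 < Db := by rw [hDb]; positivity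
  rw [← mul_le_mul_iff_of_pos_right (mul_pos hDkpos hDbpos)]
  have e1 : b k * b (bb+1) * (m.choose (k+1) : ℝ) * (Dk * Db)
      = (b k * b bb) * ((α + bb) * ((β₁ + 1 + k) * (β₂ + k)) * ((m.choose k : ℝ) * (bb+1))) := by
    rw [hDk, hDb]
    linear_combination (b k * (m.choose (k+1) : ℝ) * ((β₁ + 1 + k) * ((β₂ + k) * (k+1)))) * h2
      + (b k * b bb * (α + bb) * ((β₁ + 1 + k) * (β₂ + k))) * hqrel
  have e2 : b (k+1) * b bb * (m.choose k : ℝ) * (Dk * Db)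
      = (b k * b bb) * ((α + k) * ((β₁ + 1 + bb) * (β₂ + bb)) * ((m.choose k : ℝ) * (bb+1))) := by
    rw [hDk, hDb]
    linear_combination (b bb * (m.choose k : ℝ) * ((β₁ + 1 + bb) * ((β₂ + bb) * (bb+1)))) * h1
  rw [e1, e2]
  have hcast : (k:ℝ) ≤ (bb:ℝ) := by exact_mod_cast hkbb
  have := cross hα hβ₁ hβ₂ hαβ (Nat.cast_nonneg k) hcast
  have hfac : (0:ℝ) ≤ (m.choose k : ℝ) * (bb+1) := by positivity
  exact mul_le_mul_of_nonneg_left (mul_le_mul_of_nonneg_right this hfac)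
    (mul_pos hbk hbbb).le

include hα hβ₁ hβ₂ hαβ in
lemma ss_mono {m j k : ℕ} (hjk : j ≤ k) (hk : 2 * k ≤ m + 1) :
    ss α β₁ β₂ m j ≤ ss α β₁ β₂ m k := by
  induction k with
  | zero => interval_cases j; rfl
  | succ n ih =>
    rcases Nat.lt_or_ge j (n+1) with h | h
    · exact le_trans (ih (by omega) (by omega)) (ss_step hα hβ₁ hβ₂ hαβ (by omega))
    · have : j = n + 1 := by omega
      subst this; rfl

omit hα hβ₁ hβ₂ hαβ in
lemma ss_symm {m k : ℕ} (hk : k ≤ m) : ss α β₁ β₂ m (m - k) = ss α β₁ β₂ m k := by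
  unfold ss tt
  rw [Nat.choose_symm hk, Nat.sub_sub_self hk, mul_comm]

omit hα hβ₁ hβ₂ hαβ in
lemma tt_symm {m k : ℕ} (hk : k ≤ m) : tt α β₁ β₂ m (m - k) = tt α β₁ β₂ m k := by
  unfold tt; rw [Nat.sub_sub_self hk, mul_comm]

end Comb

/-- ℕ binomial identity: `∑ k(m-k)C(m,k) = m(m-1)2^(m-2)` for `m = m'+2`. -/
lemma choose_weight_sum (m' : ℕ) :
    ∑ k ∈ range (m' + 3), k * (m' + 2 - k) * Nat.choose (m' + 2) k
      = (m' + 2) * (m' + 1) * 2 ^ m' := by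
  rw [Finset.sum_range_succ']
  simp only [Nat.zero_mul, Nat.mul_zero, Nat.add_zero, Nat.zero_add]
  have hterm : ∀ k, (k + 1) * (m' + 2 - (k + 1)) * Nat.choose (m' + 2) (k + 1)
      = (m' + 2) * ((m' + 1) * Nat.choose m' k) := by
    intro k
    have hA : (m' + 2) * Nat.choose (m' + 1) k = Nat.choose (m' + 2) (k + 1) * (k + 1) :=
      Nat.add_one_mul_choose_eq (m' + 1) k
    have hB : (m' + 1) * Nat.choose m' k = Nat.choose (m' + 1) (k + 1) * (k + 1) :=
      Nat.add_one_mul_choose_eq m' k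
    have hC : Nat.choose (m' + 1) (k + 1) * (k + 1) = Nat.choose (m' + 1) k * (m' + 1 - k) :=
      Nat.choose_succ_right_eq (m' + 1) k
    have h2 : m' + 2 - (k + 1) = m' + 1 - k := by omega
    calc (k + 1) * (m' + 2 - (k + 1)) * Nat.choose (m' + 2) (k + 1)
        = (m' + 1 - k) * (Nat.choose (m' + 2) (k + 1) * (k + 1)) := by rw [h2]; ring
      _ = (m' + 1 - k) * ((m' + 2) * Nat.choose (m' + 1) k) := by rw [hA]
      _ = (m' + 2) * (Nat.choose (m' + 1) k * (m' + 1 - k)) := by ring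
      _ = (m' + 2) * ((m' + 1) * Nat.choose m' k) := by rw [← hC, ← hB]
  calc ∑ k ∈ range (m' + 2), (k + 1) * (m' + 2 - (k + 1)) * Nat.choose (m' + 2) (k + 1) + 0
      = ∑ k ∈ range (m' + 2), (m' + 2) * ((m' + 1) * Nat.choose m' k) := by
        rw [Nat.add_zero]; exact Finset.sum_congr rfl fun k _ => hterm k
    _ = (m' + 2) * ((m' + 1) * ∑ k ∈ range (m' + 2), Nat.choose m' k) := by
        rw [Finset.mul_sum, Finset.mul_sum]
    _ = (m' + 2) * (m' + 1) * 2 ^ m' := by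
        rw [Finset.sum_range_succ, Nat.choose_eq_zero_of_lt (by omega), Nat.add_zero,
          Nat.sum_range_choose]
        ring

/-- Chebyshev-type double sum expansion. -/
lemma cheby_expand (R : Finset ℕ) (t q h : ℕ → ℝ) :
    ∑ j ∈ R, ∑ k ∈ R, (t j * q k - t k * q j) * (h j - h k)
      = 2 * ((∑ j ∈ R, t j * h j) * (∑ j ∈ R, q j)
           - (∑ j ∈ R, t j) * (∑ j ∈ R, q j * h j)) := by
  have : ∀ j, ∑ k ∈ R, (t j * q k - t k * q j) * (h j - h k)
      = (t j * h j) * (∑ k ∈ R, q k) - t j * (∑ k ∈ R, q k * h k)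
        - (q j * h j) * (∑ k ∈ R, t k) + q j * (∑ k ∈ R, t k * h k) := by
    intro j
    rw [Finset.mul_sum, Finset.mul_sum, Finset.mul_sum, Finset.mul_sum,
      ← Finset.sum_sub_distrib, ← Finset.sum_sub_distrib, ← Finset.sum_add_distrib]
    exact Finset.sum_congr rfl fun k _ => by ring
  rw [Finset.sum_congr rfl fun j _ => this j]
  rw [Finset.sum_add_distrib, Finset.sum_sub_distrib, Finset.sum_sub_distrib,
    ← Finset.sum_mul, ← Finset.sum_mul, ← Finset.sum_mul, ← Finset.sum_mul]
  ring

section Comb2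
variable {α β₁ β₂ : ℝ} (hα : 0 < α) (hβ₁ : 0 < β₁) (hβ₂ : 0 < β₂) (hαβ : β₂ ≤ α)

include hα hβ₁ hβ₂ hαβ in
/-- Comonotonicity: `ss` and `k(m-k)` vary together. -/
lemma comono {m j k : ℕ} (hj : j ≤ m) (hk : k ≤ m) :
    0 ≤ (ss α β₁ β₂ m j - ss α β₁ β₂ m k)
        * ((j * (m - j) : ℕ) - ((k * (m - k) : ℕ) : ℝ)) := by
  have key : ∀ j k : ℕ, j ≤ m → k ≤ m → min j (m - j) ≤ min k (m - k) →
      ss α β₁ β₂ m j ≤ ss α β₁ β₂ m k ∧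
      ((j * (m - j) : ℕ) : ℝ) ≤ ((k * (m - k) : ℕ) : ℝ) := by
    intro j k hj hk hmin
    obtain ⟨j', hj'⟩ : ∃ j', j' = min j (m - j) := ⟨_, rfl⟩
    obtain ⟨k', hk'⟩ : ∃ k', k' = min k (m - k) := ⟨_, rfl⟩
    have hsj : ss α β₁ β₂ m j = ss α β₁ β₂ m j' := by
      rcases Nat.le_total j (m - j) with h | h
      · rw [hj', min_eq_left h]
      · rw [hj', min_eq_right h]
        exact (ss_symm hj).symm
    have hsk : ss α β₁ β₂ m k = ss α β₁ β₂ m k' := by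
      rcases Nat.le_total k (m - k) with h | h
      · rw [hk', min_eq_left h]
      · rw [hk', min_eq_right h]
        exact (ss_symm hk).symm
    have hhj : j * (m - j) = j' * (m - j') := by
      rcases Nat.le_total j (m - j) with h | h
      · rw [hj', min_eq_left h]
      · rw [hj', min_eq_right h, show m - (m - j) = j from by omega, Nat.mul_comm]
    have hhk : k * (m - k) = k' * (m - k') := by
      rcases Nat.le_total k (m - k) with h | h
      · rw [hk', min_eq_left h]
      · rw [hk', min_eq_right h, show m - (m - k) = k from by omega, Nat.mul_comm]
    have hj'k' : j' ≤ k' := by rw [hj', hk']; exact hmin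
    have h2k' : 2 * k' ≤ m := by omega
    constructor
    · rw [hsj, hsk]; exact ss_mono hα hβ₁ hβ₂ hαβ hj'k' (by omega)
    · rw [hhj, hhk]
      have hj'm : j' ≤ m := by omega
      have hk'm : k' ≤ m := by omega
      push_cast [Nat.cast_sub hj'm, Nat.cast_sub hk'm]
      have hxy : (j' : ℝ) ≤ (k' : ℝ) := by exact_mod_cast hj'k'
      have hsum : (j' : ℝ) + (k' : ℝ) ≤ (m : ℝ) := by
        have : j' + k' ≤ m := by omega
        exact_mod_cast this
      nlinarith [mul_nonneg (sub_nonneg.2 hxy) (by linarith : (0:ℝ) ≤ (m:ℝ) - j' - k')]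
  rcases Nat.le_total (min j (m - j)) (min k (m - k)) with h | h
  · obtain ⟨h1, h2⟩ := key j k hj hk h
    nlinarith
  · obtain ⟨h1, h2⟩ := key k j hk hj h
    nlinarith

include hα hβ₁ hβ₂ hαβ in
lemma star (m : ℕ) :
    ((m * (m - 1) : ℕ) : ℝ) * ∑ k ∈ range (m + 1), tt α β₁ β₂ m k
      ≤ 4 * ∑ k ∈ range (m + 1), tt α β₁ β₂ m k * ((k * (m - k) : ℕ) : ℝ) := by
  have httpos : ∀ k, 0 < tt α β₁ β₂ m k := tt_pos hα hβ₁ hβ₂ m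
  rcases Nat.lt_or_ge m 2 with hm | hm
  · have h0 : m * (m - 1) = 0 := by interval_cases m <;> rfl
    rw [h0, Nat.cast_zero, zero_mul]
    have : (0:ℝ) ≤ ∑ k ∈ range (m + 1), tt α β₁ β₂ m k * ((k * (m - k) : ℕ) : ℝ) :=
      Finset.sum_nonneg fun k _ => mul_nonneg (httpos k).le (Nat.cast_nonneg _)
    linarith
  · obtain ⟨m', rfl⟩ : ∃ m', m = m' + 2 := ⟨m - 2, by omega⟩
    set t : ℕ → ℝ := fun k => tt α β₁ β₂ (m' + 2) k with ht
    set q : ℕ → ℝ := fun k => (((m' + 2).choose k : ℕ) : ℝ) with hq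
    set h : ℕ → ℝ := fun k => ((k * (m' + 2 - k) : ℕ) : ℝ) with hh
    have hpair : ∀ j ∈ range (m' + 3), ∀ k ∈ range (m' + 3),
        0 ≤ (t j * q k - t k * q j) * (h j - h k) := by
      intro j hj k hk
      rw [Finset.mem_range] at hj hk
      have hqj : (0:ℝ) < q j := by
        have h := Nat.choose_pos (show j ≤ m' + 2 by omega)
        rw [hq]; simp only []; exact_mod_cast h
      have hqk : (0:ℝ) < q k := by
        have h := Nat.choose_pos (show k ≤ m' + 2 by omega)
        rw [hq]; simp only []; exact_mod_cast h
      have hrw : t j * q k - t k * q j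
          = ((ss α β₁ β₂ (m' + 2) j - ss α β₁ β₂ (m' + 2) k)) * (q j * q k) := by
        unfold ss
        rw [ht, hq]
        have hqj' : (((m' + 2).choose j : ℕ) : ℝ) ≠ 0 := ne_of_gt hqj
        have hqk' : (((m' + 2).choose k : ℕ) : ℝ) ≠ 0 := ne_of_gt hqk
        field_simp
      rw [hrw]
      have := comono hα hβ₁ hβ₂ hαβ (m := m' + 2) (j := j) (k := k) (by omega) (by omega)
      calc (0:ℝ) ≤ ((ss α β₁ β₂ (m' + 2) j - ss α β₁ β₂ (m' + 2) k) * (h j - h k))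
            * (q j * q k) := mul_nonneg this (by positivity)
        _ = (ss α β₁ β₂ (m' + 2) j - ss α β₁ β₂ (m' + 2) k) * (q j * q k) * (h j - h k) := by
            ring
    have hdouble : 0 ≤ ∑ j ∈ range (m' + 3), ∑ k ∈ range (m' + 3),
        (t j * q k - t k * q j) * (h j - h k) :=
      Finset.sum_nonneg fun j hj => Finset.sum_nonneg fun k hk => hpair j hj k hk
    rw [cheby_expand] at hdouble
    have hQ : ∑ j ∈ range (m' + 3), q j = 2 ^ (m' + 2) := by
      rw [hq]
      rw [← Nat.cast_sum]
      exact_mod_cast congrArg (Nat.cast (R := ℝ)) (Nat.sum_range_choose (m' + 2))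
    have hQH : ∑ j ∈ range (m' + 3), q j * h j = (((m' + 2) * (m' + 1) : ℕ) : ℝ) * 2 ^ m' := by
      rw [hq, hh]
      have : ∀ j, (((m' + 2).choose j : ℕ) : ℝ) * ((j * (m' + 2 - j) : ℕ) : ℝ)
          = ((j * (m' + 2 - j) * (m' + 2).choose j : ℕ) : ℝ) := by
        intro j; push_cast; ring
      rw [Finset.sum_congr rfl fun j _ => this j, ← Nat.cast_sum, choose_weight_sum]
      push_cast; ring
    rw [hQ, hQH] at hdouble
    have hpow : (0:ℝ) < 2 ^ m' := by positivity
    have h2 : (2:ℝ) ^ (m' + 2) = 4 * 2 ^ m' := by ring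
    rw [h2] at hdouble
    have hfin : (((m' + 2) * (m' + 1) : ℕ) : ℝ) * (∑ j ∈ range (m' + 3), t j)
        ≤ 4 * ∑ j ∈ range (m' + 3), t j * h j := by
      nlinarith [hpow]
    have hmm : (m' + 2) * (m' + 2 - 1) = (m' + 2) * (m' + 1) := rfl
    rw [hmm]
    exact hfin

include hα hβ₁ hβ₂ hαβ in
/-- The core coefficient inequality. -/
lemma coeff_core (m : ℕ) :
    β₁ * ∑ k ∈ range (m + 1), tt α β₁ β₂ m k * (((m - k) * (m - k - 1) : ℕ) : ℝ)
      ≤ (β₁ + 1) * ∑ k ∈ range (m + 1), tt α β₁ β₂ m k * ((k * (m - k) : ℕ) : ℝ) := by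
  have httpos : ∀ k, 0 < tt α β₁ β₂ m k := tt_pos hα hβ₁ hβ₂ m
  set T := ∑ k ∈ range (m + 1), tt α β₁ β₂ m k with hT
  set H := ∑ k ∈ range (m + 1), tt α β₁ β₂ m k * ((k * (m - k) : ℕ) : ℝ) with hH
  set P := ∑ k ∈ range (m + 1), tt α β₁ β₂ m k * (((m - k) * (m - k - 1) : ℕ) : ℝ) with hP
  have hHnn : 0 ≤ H :=
    Finset.sum_nonneg fun k _ => mul_nonneg (httpos k).le (Nat.cast_nonneg _)
  have hrefl : P = ∑ k ∈ range (m + 1), tt α β₁ β₂ m k * ((k * (k - 1) : ℕ) : ℝ) := by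
    rw [hP, ← Finset.sum_range_reflect (fun k => tt α β₁ β₂ m k * ((k * (k - 1) : ℕ) : ℝ)) (m+1)]
    refine Finset.sum_congr rfl fun k hk => ?_
    rw [Finset.mem_range] at hk
    have hkm : k ≤ m := by omega
    rw [show m + 1 - 1 - k = m - k from by omega, tt_symm hkm]
  have hident : ∀ k ≤ m, ((k * (k - 1) : ℕ) : ℝ) + (((m - k) * (m - k - 1) : ℕ) : ℝ)
      = ((m * (m - 1) : ℕ) : ℝ) - 2 * ((k * (m - k) : ℕ) : ℝ) := by
    intro k hkm
    have hnat : (k * (k - 1) + (m - k) * (m - k - 1) + 2 * (k * (m - k)) : ℕ) = m * (m - 1) := by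
      obtain ⟨j, rfl⟩ : ∃ j, m = k + j := ⟨m - k, by omega⟩
      rcases k with _ | k <;> rcases j with _ | j <;> simp <;> ring_nf <;> omega
    have := congrArg (Nat.cast (R := ℝ)) hnat
    push_cast at this ⊢
    linarith
  have h2P : 2 * P = ((m * (m - 1) : ℕ) : ℝ) * T - 2 * H := by
    have : P + P = ((m * (m - 1) : ℕ) : ℝ) * T - 2 * H := by
      nth_rewrite 1 [hrefl]
      rw [hP, hT, hH, ← Finset.sum_add_distrib, Finset.mul_sum, Finset.mul_sum,
        ← Finset.sum_sub_distrib]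
      refine Finset.sum_congr rfl fun k hk => ?_
      rw [Finset.mem_range] at hk
      have := hident k (by omega)
      rw [← mul_add, this]; ring
    linarith
  have hstar := star hα hβ₁ hβ₂ hαβ m
  rw [← hT, ← hH] at hstar
  have := mul_le_mul_of_nonneg_left hstar hβ₁.le
  nlinarith [hHnn, hβ₁]
end Comb2

section Sum
variable {α β₁ β₂ : ℝ} (hα : 0 < α) (hβ₁ : 0 < β₁) (hβ₂ : 0 < β₂) (hαβ : β₂ ≤ α)

include hα hβ₁ hβ₂ hαβ in
lemma summable_master {R : ℝ} (hR : 1 ≤ R) :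
    Summable (fun n : ℕ => ((n : ℝ) + 1) ^ 2 * co α (β₁ + 1) β₂ n * R ^ n) := by
  have hβ₁' : (0:ℝ) < β₁ + 1 := by linarith
  have hR0 : (0:ℝ) < R := by linarith
  have hupos : ∀ n : ℕ, 0 < ((n : ℝ) + 1) ^ 2 * co α (β₁ + 1) β₂ n * R ^ n := by
    intro n
    have := co_pos hα hβ₁' hβ₂ n
    positivity
  apply summable_of_ratio_norm_eventually_le (r := 1/2) (by norm_num)
  rw [Filter.eventually_atTop]
  refine ⟨⌈8 * R * α / β₂⌉₊, fun n hn => ?_⟩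
  have hn' : 8 * R * α ≤ β₂ * ((n : ℝ) + 1) := by
    have h1 : 8 * R * α / β₂ ≤ (⌈8 * R * α / β₂⌉₊ : ℝ) := Nat.le_ceil _
    have h2 : ((⌈8 * R * α / β₂⌉₊ : ℕ) : ℝ) ≤ (n : ℝ) := by exact_mod_cast hn
    have h3 : 8 * R * α / β₂ ≤ (n : ℝ) := le_trans h1 h2
    calc 8 * R * α = (8 * R * α / β₂) * β₂ := by field_simp
      _ ≤ (n : ℝ) * β₂ := mul_le_mul_of_nonneg_right h3 hβ₂.le
      _ ≤ β₂ * ((n : ℝ) + 1) := by nlinarith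
  rw [Real.norm_eq_abs, Real.norm_eq_abs, abs_of_pos (hupos _), abs_of_pos (hupos _)]
  set Dn : ℝ := (β₁ + 1 + n) * ((β₂ + n) * (n + 1)) with hDn
  have hDnpos : 0 < Dn := by
    have : (0:ℝ) < (n:ℝ) + 1 := by positivity
    rw [hDn]; positivity
  have hco := co_succ hα hβ₁' hβ₂ n
  have hcon := co_pos hα hβ₁' hβ₂ n
  have key : ((n : ℝ) + 2) ^ 2 * ((α + n) * R) * β₂ ≤ 1/2 * (((n:ℝ)+1)^2 * Dn) * β₂ := by
    have hcross : (α + n) * β₂ ≤ α * (β₂ + n) := by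
      nlinarith [(Nat.cast_nonneg n : (0:ℝ) ≤ (n:ℝ))]
    calc ((n : ℝ) + 2) ^ 2 * ((α + n) * R) * β₂
        = ((n:ℝ)+2)^2 * ((α + n) * β₂) * R := by ring
      _ ≤ (2*((n:ℝ)+1))^2 * (α * (β₂ + n)) * R := by
          have h1 : ((n:ℝ)+2)^2 ≤ (2*((n:ℝ)+1))^2 := by
            nlinarith [(Nat.cast_nonneg n : (0:ℝ) ≤ (n:ℝ))]
          have h2 : (0:ℝ) ≤ (α + n) * β₂ := by positivity
          have h3 : (0:ℝ) ≤ α * (β₂ + n) := by positivity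
          nlinarith [mul_le_mul h1 hcross h2 (by positivity : (0:ℝ) ≤ (2*((n:ℝ)+1))^2)]
      _ = ((n:ℝ)+1)^2 * (β₂ + n) * (4 * α * R) := by ring
      _ ≤ ((n:ℝ)+1)^2 * (β₂ + n) * (1/2 * (β₂ * ((n:ℝ)+1))) := by
          have : 4 * α * R ≤ 1/2 * (β₂ * ((n:ℝ)+1)) := by linarith
          have hfac : (0:ℝ) ≤ ((n:ℝ)+1)^2 * (β₂ + n) := by positivity
          exact mul_le_mul_of_nonneg_left this hfac
      _ ≤ ((n:ℝ)+1)^2 * (β₂ + n) * (1/2 * (β₂ * ((n:ℝ)+1))) * (β₁ + 1 + n) := by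
          nlinarith [mul_pos (mul_pos (by positivity : (0:ℝ) < ((n:ℝ)+1)^2)
            (by positivity : (0:ℝ) < β₂ + (n:ℝ)))
            (by positivity : (0:ℝ) < 1/2 * (β₂ * ((n:ℝ)+1)))]
      _ = 1/2 * (((n:ℝ)+1)^2 * Dn) * β₂ := by rw [hDn]; ring
  have hmul := mul_le_mul_of_nonneg_right key
    (by positivity : (0:ℝ) ≤ co α (β₁ + 1) β₂ n * R ^ n)
  have lhs_eq : (((n:ℝ) + 1) + 1) ^ 2 * co α (β₁ + 1) β₂ (n+1) * R ^ (n+1) * (Dn * β₂)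
      = ((n : ℝ) + 2) ^ 2 * ((α + n) * R) * β₂ * (co α (β₁ + 1) β₂ n * R ^ n) := by
    have hq : co α (β₁ + 1) β₂ (n+1) * Dn = co α (β₁ + 1) β₂ n * (α + n) := by
      rw [hDn]; linear_combination hco
    calc (((n:ℝ) + 1) + 1) ^ 2 * co α (β₁ + 1) β₂ (n+1) * R ^ (n+1) * (Dn * β₂)
        = ((n:ℝ) + 2) ^ 2 * (co α (β₁ + 1) β₂ (n+1) * Dn) * R ^ (n+1) * β₂ := by ring
      _ = ((n:ℝ) + 2) ^ 2 * (co α (β₁ + 1) β₂ n * (α + n)) * R ^ (n+1) * β₂ := by rw [hq]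
      _ = ((n : ℝ) + 2) ^ 2 * ((α + n) * R) * β₂ * (co α (β₁ + 1) β₂ n * R ^ n) := by
          rw [pow_succ]; ring
  have rhs_eq : 1/2 * (((n:ℝ)+1)^2 * co α (β₁ + 1) β₂ n * R ^ n) * (Dn * β₂)
      = 1/2 * (((n:ℝ)+1)^2 * Dn) * β₂ * (co α (β₁ + 1) β₂ n * R ^ n) := by ring
  have final : (((n:ℝ) + 1) + 1) ^ 2 * co α (β₁ + 1) β₂ (n+1) * R ^ (n+1) * (Dn * β₂)
      ≤ 1/2 * (((n:ℝ)+1)^2 * co α (β₁ + 1) β₂ n * R ^ n) * (Dn * β₂) := by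
    rw [lhs_eq, rhs_eq]; exact hmul
  have hfin2 := le_of_mul_le_mul_right final (mul_pos hDnpos hβ₂)
  push_cast
  linarith [hfin2]
end Sum

noncomputable def gg (α β₁ β₂ : ℝ) (y : ℝ) : ℝ := ∑' n : ℕ, co α (β₁ + 1) β₂ n * y ^ n
noncomputable def gg₁ (α β₁ β₂ : ℝ) (y : ℝ) : ℝ :=
  ∑' n : ℕ, co α (β₁ + 1) β₂ n * ((n : ℝ) * y ^ (n - 1))
noncomputable def gg₂ (α β₁ β₂ : ℝ) (y : ℝ) : ℝ :=
  ∑' n : ℕ, co α (β₁ + 1) β₂ n * ((n : ℝ) * (((n - 1 : ℕ) : ℝ) * y ^ (n - 2)))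

section Deriv
variable {α β₁ β₂ : ℝ} (hα : 0 < α) (hβ₁ : 0 < β₁) (hβ₂ : 0 < β₂) (hαβ : β₂ ≤ α)

include hα hβ₁ hβ₂ in
lemma bound0 {R y : ℝ} (hR : 1 ≤ R) (hy : |y| ≤ R) (n : ℕ) :
    ‖co α (β₁ + 1) β₂ n * y ^ n‖ ≤ ((n : ℝ) + 1) ^ 2 * co α (β₁ + 1) β₂ n * R ^ n := by
  have hc := co_pos hα (show (0:ℝ) < β₁ + 1 by linarith) hβ₂ n
  rw [norm_mul, Real.norm_eq_abs, Real.norm_eq_abs, abs_of_pos hc, abs_pow]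
  calc co α (β₁ + 1) β₂ n * |y| ^ n ≤ co α (β₁ + 1) β₂ n * R ^ n :=
        mul_le_mul_of_nonneg_left (pow_le_pow_left₀ (abs_nonneg y) hy n) hc.le
    _ ≤ ((n : ℝ) + 1) ^ 2 * co α (β₁ + 1) β₂ n * R ^ n := by
        have h1 : (1:ℝ) ≤ ((n:ℝ)+1)^2 := by nlinarith [(Nat.cast_nonneg n : (0:ℝ) ≤ (n:ℝ))]
        have h2 : (0:ℝ) ≤ R ^ n := by positivity
        nlinarith [mul_pos hc (by positivity : (0:ℝ) < R ^ n)]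

include hα hβ₁ hβ₂ in
lemma bound1 {R y : ℝ} (hR : 1 ≤ R) (hy : |y| ≤ R) (n : ℕ) :
    ‖co α (β₁ + 1) β₂ n * ((n : ℝ) * y ^ (n - 1))‖
      ≤ ((n : ℝ) + 1) ^ 2 * co α (β₁ + 1) β₂ n * R ^ n := by
  have hc := co_pos hα (show (0:ℝ) < β₁ + 1 by linarith) hβ₂ n
  have habs : (0:ℝ) ≤ |y| := abs_nonneg y
  have hR0 : (0:ℝ) < R := by linarith
  rw [norm_mul, norm_mul, Real.norm_eq_abs, Real.norm_eq_abs, Real.norm_eq_abs,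
    abs_of_pos hc, abs_pow, Nat.abs_cast]
  have hyR : |y| ^ (n - 1) ≤ R ^ n :=
    le_trans (pow_le_pow_left₀ habs hy _) (pow_le_pow_right₀ hR (Nat.sub_le n 1))
  have hn : (n : ℝ) ≤ ((n:ℝ)+1)^2 := by nlinarith [(Nat.cast_nonneg n : (0:ℝ) ≤ (n:ℝ))]
  calc co α (β₁ + 1) β₂ n * ((n:ℝ) * |y| ^ (n-1))
      ≤ co α (β₁ + 1) β₂ n * (((n:ℝ)+1)^2 * R ^ n) :=
        mul_le_mul_of_nonneg_left (mul_le_mul hn hyR (by positivity) (by positivity)) hc.le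
    _ = ((n : ℝ) + 1) ^ 2 * co α (β₁ + 1) β₂ n * R ^ n := by ring

include hα hβ₁ hβ₂ in
lemma bound2 {R y : ℝ} (hR : 1 ≤ R) (hy : |y| ≤ R) (n : ℕ) :
    ‖co α (β₁ + 1) β₂ n * ((n : ℝ) * (((n - 1 : ℕ) : ℝ) * y ^ (n - 2)))‖
      ≤ ((n : ℝ) + 1) ^ 2 * co α (β₁ + 1) β₂ n * R ^ n := by
  have hc := co_pos hα (show (0:ℝ) < β₁ + 1 by linarith) hβ₂ n
  have habs : (0:ℝ) ≤ |y| := abs_nonneg y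
  have hR0 : (0:ℝ) < R := by linarith
  rw [norm_mul, norm_mul, norm_mul, Real.norm_eq_abs, Real.norm_eq_abs, Real.norm_eq_abs,
    Real.norm_eq_abs, abs_of_pos hc, abs_pow, Nat.abs_cast, Nat.abs_cast]
  have hyR : |y| ^ (n - 2) ≤ R ^ n :=
    le_trans (pow_le_pow_left₀ habs hy _) (pow_le_pow_right₀ hR (Nat.sub_le n 2))
  have hn : (n : ℝ) * ((n - 1 : ℕ) : ℝ) ≤ ((n:ℝ)+1)^2 := by
    have h1 : ((n - 1 : ℕ) : ℝ) ≤ (n : ℝ) := by exact_mod_cast Nat.sub_le n 1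
    nlinarith [(Nat.cast_nonneg n : (0:ℝ) ≤ (n:ℝ)),
      (Nat.cast_nonneg (n-1) : (0:ℝ) ≤ ((n-1:ℕ):ℝ))]
  calc co α (β₁ + 1) β₂ n * ((n:ℝ) * (((n-1:ℕ):ℝ) * |y| ^ (n-2)))
      = co α (β₁ + 1) β₂ n * (((n:ℝ) * ((n-1:ℕ):ℝ)) * |y| ^ (n-2)) := by ring
    _ ≤ co α (β₁ + 1) β₂ n * (((n:ℝ)+1)^2 * R ^ n) :=
        mul_le_mul_of_nonneg_left (mul_le_mul hn hyR (by positivity) (by positivity)) hc.le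
    _ = ((n : ℝ) + 1) ^ 2 * co α (β₁ + 1) β₂ n * R ^ n := by ring

include hα hβ₁ hβ₂ hαβ in
lemma summable0 (y : ℝ) : Summable (fun n : ℕ => ‖co α (β₁ + 1) β₂ n * y ^ n‖) := by
  have hR : (1:ℝ) ≤ |y| + 1 := by linarith [abs_nonneg y]
  exact (summable_master hα hβ₁ hβ₂ hαβ hR).of_nonneg_of_le (fun n => norm_nonneg _)
    (fun n => bound0 hα hβ₁ hβ₂ hR (by linarith) n)

include hα hβ₁ hβ₂ hαβ in
lemma summable1 (y : ℝ) :
    Summable (fun n : ℕ => ‖co α (β₁ + 1) β₂ n * ((n : ℝ) * y ^ (n - 1))‖) := by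
  have hR : (1:ℝ) ≤ |y| + 1 := by linarith [abs_nonneg y]
  exact (summable_master hα hβ₁ hβ₂ hαβ hR).of_nonneg_of_le (fun n => norm_nonneg _)
    (fun n => bound1 hα hβ₁ hβ₂ hR (by linarith) n)

include hα hβ₁ hβ₂ hαβ in
lemma summable2 (y : ℝ) :
    Summable (fun n : ℕ =>
      ‖co α (β₁ + 1) β₂ n * ((n : ℝ) * (((n - 1 : ℕ) : ℝ) * y ^ (n - 2)))‖) := by
  have hR : (1:ℝ) ≤ |y| + 1 := by linarith [abs_nonneg y]
  exact (summable_master hα hβ₁ hβ₂ hαβ hR).of_nonneg_of_le (fun n => norm_nonneg _)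
    (fun n => bound2 hα hβ₁ hβ₂ hR (by linarith) n)

include hα hβ₁ hβ₂ hαβ in
lemma hasDerivAt_gg (y : ℝ) : HasDerivAt (gg α β₁ β₂) (gg₁ α β₁ β₂ y) y := by
  obtain ⟨R, hR, hyR⟩ : ∃ R : ℝ, 1 ≤ R ∧ |y| < R :=
    ⟨|y| + 1, by linarith [abs_nonneg y], by linarith⟩
  unfold gg gg₁
  refine hasDerivAt_tsum_of_isPreconnected
    (g' := fun (n : ℕ) (v : ℝ) => co α (β₁ + 1) β₂ n * ((n : ℝ) * v ^ (n - 1)))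
    (summable_master hα hβ₁ hβ₂ hαβ hR)
    (isOpen_Ioo (a := -R) (b := R)) (convex_Ioo _ _).isPreconnected
    (fun n x _ => (hasDerivAt_pow n x).const_mul (co α (β₁ + 1) β₂ n))
    (fun n x hx => bound1 hα hβ₁ hβ₂ hR ?_ n) (y₀ := 0) ?_ ?_ ?_
  · rw [Set.mem_Ioo] at hx; rw [abs_le]; exact ⟨by linarith [hx.1], by linarith [hx.2]⟩
  · rw [Set.mem_Ioo]; exact ⟨by linarith, by linarith⟩
  · exact ((summable0 hα hβ₁ hβ₂ hαβ) 0).of_norm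
  · rw [Set.mem_Ioo]; exact ⟨by linarith [neg_abs_le y], by linarith [le_abs_self y]⟩

include hα hβ₁ hβ₂ hαβ in
lemma hasDerivAt_gg₁ (y : ℝ) : HasDerivAt (gg₁ α β₁ β₂) (gg₂ α β₁ β₂ y) y := by
  obtain ⟨R, hR, hyR⟩ : ∃ R : ℝ, 1 ≤ R ∧ |y| < R :=
    ⟨|y| + 1, by linarith [abs_nonneg y], by linarith⟩
  unfold gg₁ gg₂
  refine hasDerivAt_tsum_of_isPreconnected
    (g' := fun (n : ℕ) (v : ℝ) =>
      co α (β₁ + 1) β₂ n * ((n : ℝ) * (((n - 1 : ℕ) : ℝ) * v ^ (n - 2))))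
    (summable_master hα hβ₁ hβ₂ hαβ hR)
    (isOpen_Ioo (a := -R) (b := R)) (convex_Ioo _ _).isPreconnected
    (fun n x _ => ?_) (fun n x hx => bound2 hα hβ₁ hβ₂ hR ?_ n) (y₀ := 0) ?_ ?_ ?_
  · have h := (hasDerivAt_pow (n - 1) x).const_mul (co α (β₁ + 1) β₂ n * (n : ℝ))
    have hfun : (fun x : ℝ => co α (β₁ + 1) β₂ n * (n : ℝ) * x ^ (n - 1))
        = (fun x : ℝ => co α (β₁ + 1) β₂ n * ((n : ℝ) * x ^ (n - 1))) := by
      funext t; ring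
    have hval : co α (β₁ + 1) β₂ n * (n : ℝ) * (((n - 1 : ℕ) : ℝ) * x ^ (n - 1 - 1))
        = co α (β₁ + 1) β₂ n * ((n : ℝ) * (((n - 1 : ℕ) : ℝ) * x ^ (n - 2))) := by
      rw [Nat.sub_sub]; ring
    rw [hfun, hval] at h
    exact h
  · rw [Set.mem_Ioo] at hx; rw [abs_le]; exact ⟨by linarith [hx.1], by linarith [hx.2]⟩
  · rw [Set.mem_Ioo]; exact ⟨by linarith, by linarith⟩
  · exact ((summable1 hα hβ₁ hβ₂ hαβ) 0).of_norm
  · rw [Set.mem_Ioo]; exact ⟨by linarith [neg_abs_le y], by linarith [le_abs_self y]⟩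
end Deriv

section Key
variable {α β₁ β₂ : ℝ} (hα : 0 < α) (hβ₁ : 0 < β₁) (hβ₂ : 0 < β₂) (hαβ : β₂ ≤ α)

lemma conv0 (m : ℕ) (y : ℝ) :
    ∑ k ∈ range (m + 1), (co α (β₁ + 1) β₂ k * y ^ k) *
        (co α (β₁ + 1) β₂ (m - k) * (((m - k : ℕ) : ℝ) *
          (((m - k - 1 : ℕ) : ℝ) * y ^ (m - k - 2))))
      = (∑ k ∈ range (m + 1), tt α β₁ β₂ m k * (((m - k) * (m - k - 1) : ℕ) : ℝ))
          * y ^ (m - 2) := by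
  rw [Finset.sum_mul]
  refine Finset.sum_congr rfl fun k hk => ?_
  rw [Finset.mem_range] at hk
  have hkm : k ≤ m := by omega
  rcases hj : m - k with _ | j
  · simp [tt, hj]
  · rcases j with _ | j
    · simp [tt, hj]
    · have hm2 : m - 2 = k + j := by omega
      unfold tt
      rw [hj, hm2]
      have h1 : j + 2 - 1 = j + 1 := rfl
      have h2 : j + 2 - 2 = j := rfl
      rw [h1, h2, pow_add]
      push_cast
      ring

lemma conv1 (m : ℕ) (y : ℝ) :
    ∑ k ∈ range (m + 1), (co α (β₁ + 1) β₂ k * ((k : ℝ) * y ^ (k - 1))) *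
        (co α (β₁ + 1) β₂ (m - k) * (((m - k : ℕ) : ℝ) * y ^ (m - k - 1)))
      = (∑ k ∈ range (m + 1), tt α β₁ β₂ m k * ((k * (m - k) : ℕ) : ℝ)) * y ^ (m - 2) := by
  rw [Finset.sum_mul]
  refine Finset.sum_congr rfl fun k hk => ?_
  rw [Finset.mem_range] at hk
  have hkm : k ≤ m := by omega
  rcases k with _ | k
  · simp [tt]
  · rcases hj : m - (k + 1) with _ | j
    · simp [tt, hj]
    · have hm2 : m - 2 = k + j := by omega
      unfold tt
      rw [hj, hm2]
      have h1 : k + 1 - 1 = k := rfl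
      have h2 : j + 1 - 1 = j := rfl
      rw [h1, h2, pow_add]
      push_cast
      ring

include hα hβ₁ hβ₂ hαβ in
lemma key {y : ℝ} (hy : 0 ≤ y) :
    β₁ * (gg α β₁ β₂ y * gg₂ α β₁ β₂ y) ≤ (β₁ + 1) * (gg₁ α β₁ β₂ y * gg₁ α β₁ β₂ y) := by
  have s0 := summable0 hα hβ₁ hβ₂ hαβ y
  have s1 := summable1 hα hβ₁ hβ₂ hαβ y
  have s2 := summable2 hα hβ₁ hβ₂ hαβ y
  unfold gg gg₁ gg₂
  rw [tsum_mul_tsum_eq_tsum_sum_antidiagonal_of_summable_norm s0 s2,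
    tsum_mul_tsum_eq_tsum_sum_antidiagonal_of_summable_norm s1 s1,
    ← tsum_mul_left, ← tsum_mul_left]
  refine Summable.tsum_le_tsum (fun m => ?_)
    (((summable_norm_sum_mul_antidiagonal_of_summable_norm s0 s2).of_norm).mul_left _)
    (((summable_norm_sum_mul_antidiagonal_of_summable_norm s1 s1).of_norm).mul_left _)
  rw [Finset.Nat.sum_antidiagonal_eq_sum_range_succ_mk,
    Finset.Nat.sum_antidiagonal_eq_sum_range_succ_mk]
  simp only []
  rw [conv0, conv1]
  have hc := coeff_core hα hβ₁ hβ₂ hαβ m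
  have hpow : (0:ℝ) ≤ y ^ (m - 2) := pow_nonneg hy _
  calc β₁ * ((∑ k ∈ range (m + 1), tt α β₁ β₂ m k * (((m - k) * (m - k - 1) : ℕ) : ℝ))
        * y ^ (m-2))
      = (β₁ * ∑ k ∈ range (m + 1), tt α β₁ β₂ m k * (((m - k) * (m - k - 1) : ℕ) : ℝ))
          * y ^ (m-2) := by
        ring
    _ ≤ ((β₁ + 1) * ∑ k ∈ range (m + 1), tt α β₁ β₂ m k * ((k * (m - k) : ℕ) : ℝ))
          * y ^ (m-2) :=
        mul_le_mul_of_nonneg_right hc hpow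
    _ = (β₁ + 1) * ((∑ k ∈ range (m + 1), tt α β₁ β₂ m k * ((k * (m - k) : ℕ) : ℝ))
          * y ^ (m-2)) := by
        ring
end Key

section Final
variable {α β₁ β₂ : ℝ} (hα : 0 < α) (hβ₁ : 0 < β₁) (hβ₂ : 0 < β₂) (hαβ : β₂ ≤ α)

lemma prod_shift (β : ℝ) (k : ℕ) :
    β * ∏ i ∈ range k, (β + 1 + i) = (β + k) * ∏ i ∈ range k, (β + i) := by
  induction k with
  | zero => simp
  | succ k ih =>
    rw [Finset.prod_range_succ, Finset.prod_range_succ]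
    push_cast
    linear_combination (β + 1 + (k:ℝ)) * ih

include hβ₁ hβ₂ in
lemma co_shift (k : ℕ) :
    co α β₁ β₂ k * β₁ = co α (β₁ + 1) β₂ k * (β₁ + k) := by
  unfold co
  have h0 : (0:ℝ) < ∏ i ∈ range k, (β₁ + i) :=
    Finset.prod_pos fun i _ => by positivity
  have h1 : (0:ℝ) < ∏ i ∈ range k, (β₁ + 1 + i) :=
    Finset.prod_pos fun i _ => by positivity
  have h2 : (0:ℝ) < ∏ i ∈ range k, (β₂ + i) :=
    Finset.prod_pos fun i _ => by positivity
  have h3 : (0:ℝ) < (k.factorial : ℝ) := by positivity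
  rw [div_mul_eq_mul_div, div_mul_eq_mul_div,
    div_eq_div_iff (ne_of_gt (mul_pos (mul_pos h0 h2) h3)) (ne_of_gt (mul_pos (mul_pos h1 h2) h3))]
  linear_combination ((∏ i ∈ range k, (α + i)) * (∏ i ∈ range k, (β₂ + i)) * (k.factorial : ℝ))
    * prod_shift β₁ k

include hα hβ₁ hβ₂ hαβ in
lemma ffval (y : ℝ) :
    ∑' k : ℕ, co α β₁ β₂ k * y ^ k = gg α β₁ β₂ y + y * gg₁ α β₁ β₂ y / β₁ := by
  have hterm : ∀ k : ℕ, co α β₁ β₂ k * y ^ k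
      = co α (β₁ + 1) β₂ k * y ^ k
        + (co α (β₁ + 1) β₂ k * ((k : ℝ) * y ^ (k - 1))) * (y / β₁) := by
    intro k
    have hc := co_shift (α := α) hβ₁ hβ₂ k
    rcases k with _ | j
    · simp [co_zero]
    · simp only [Nat.add_sub_cancel]
      push_cast at hc ⊢
      have hβ₁ne : β₁ ≠ 0 := ne_of_gt hβ₁
      field_simp
      linear_combination (y * y ^ j) * hc
  rw [tsum_congr hterm, Summable.tsum_add ((summable0 hα hβ₁ hβ₂ hαβ y).of_norm)
    (((summable1 hα hβ₁ hβ₂ hαβ y).of_norm).mul_right _), tsum_mul_right]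
  unfold gg gg₁
  ring

include hα hβ₁ hβ₂ hαβ in
lemma gg_ge_one {y : ℝ} (hy : 0 ≤ y) : 1 ≤ gg α β₁ β₂ y := by
  have h0 : co α (β₁ + 1) β₂ 0 * y ^ 0 = 1 := by simp [co_zero]
  rw [gg]
  calc (1:ℝ) = co α (β₁ + 1) β₂ 0 * y ^ 0 := h0.symm
    _ ≤ ∑' n : ℕ, co α (β₁ + 1) β₂ n * y ^ n :=
      Summable.le_tsum ((summable0 hα hβ₁ hβ₂ hαβ y).of_norm) 0 fun j _ =>
        mul_nonneg (co_pos hα (by linarith) hβ₂ j).le (pow_nonneg hy j)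

include hα hβ₁ hβ₂ in
lemma gg₁_nonneg {y : ℝ} (hy : 0 ≤ y) : 0 ≤ gg₁ α β₁ β₂ y :=
  tsum_nonneg fun n => mul_nonneg (co_pos hα (by linarith) hβ₂ n).le
    (mul_nonneg (Nat.cast_nonneg n) (pow_nonneg hy _))

lemma gg_zero : gg α β₁ β₂ 0 = 1 := by
  unfold gg
  rw [tsum_eq_single 0 (fun n hn => by rw [zero_pow hn, mul_zero])]
  simp [co_zero]

include hα hβ₁ hβ₂ hαβ in
lemma lazarevic {z : ℝ} (hz : 0 < z) :
    β₁ * Real.log (gg α β₁ β₂ z + z * gg₁ α β₁ β₂ z / β₁)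
      ≤ (β₁ + 1) * Real.log (gg α β₁ β₂ z) := by
  set F : ℝ → ℝ := fun y =>
    (β₁ + 1) * Real.log (gg α β₁ β₂ y) - β₁ * Real.log (gg α β₁ β₂ y + y * gg₁ α β₁ β₂ y / β₁)
    with hF
  have hgpos : ∀ y : ℝ, 0 ≤ y → 0 < gg α β₁ β₂ y := fun y hy => by
    linarith [gg_ge_one hα hβ₁ hβ₂ hαβ hy]
  have hfpos : ∀ y : ℝ, 0 ≤ y → 0 < gg α β₁ β₂ y + y * gg₁ α β₁ β₂ y / β₁ := fun y hy => by
    have h1 := gg₁_nonneg hα hβ₁ hβ₂ hy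
    have h2 := hgpos y hy
    have : 0 ≤ y * gg₁ α β₁ β₂ y / β₁ := by positivity
    linarith
  have hDF : ∀ y : ℝ, 0 ≤ y → HasDerivAt F
      ((β₁ + 1) * (gg₁ α β₁ β₂ y / gg α β₁ β₂ y)
        - β₁ * ((gg₁ α β₁ β₂ y + (1 * gg₁ α β₁ β₂ y + y * gg₂ α β₁ β₂ y) / β₁)
          / (gg α β₁ β₂ y + y * gg₁ α β₁ β₂ y / β₁))) y := by
    intro y hy
    have h1 : HasDerivAt (fun y => Real.log (gg α β₁ β₂ y)) (gg₁ α β₁ β₂ y / gg α β₁ β₂ y) y :=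
      (hasDerivAt_gg hα hβ₁ hβ₂ hαβ y).log (ne_of_gt (hgpos y hy))
    have h2 : HasDerivAt (fun y => gg α β₁ β₂ y + y * gg₁ α β₁ β₂ y / β₁)
        (gg₁ α β₁ β₂ y + (1 * gg₁ α β₁ β₂ y + y * gg₂ α β₁ β₂ y) / β₁) y :=
      (hasDerivAt_gg hα hβ₁ hβ₂ hαβ y).add
        (((hasDerivAt_id y).mul (hasDerivAt_gg₁ hα hβ₁ hβ₂ hαβ y)).div_const β₁)
    have h3 : HasDerivAt (fun y => Real.log (gg α β₁ β₂ y + y * gg₁ α β₁ β₂ y / β₁))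
        ((gg₁ α β₁ β₂ y + (1 * gg₁ α β₁ β₂ y + y * gg₂ α β₁ β₂ y) / β₁)
          / (gg α β₁ β₂ y + y * gg₁ α β₁ β₂ y / β₁)) y :=
      h2.log (ne_of_gt (hfpos y hy))
    exact (h1.const_mul (β₁ + 1)).sub (h3.const_mul β₁)
  have hderiv_nonneg : ∀ y : ℝ, 0 ≤ y →
      0 ≤ (β₁ + 1) * (gg₁ α β₁ β₂ y / gg α β₁ β₂ y)
        - β₁ * ((gg₁ α β₁ β₂ y + (1 * gg₁ α β₁ β₂ y + y * gg₂ α β₁ β₂ y) / β₁)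
          / (gg α β₁ β₂ y + y * gg₁ α β₁ β₂ y / β₁)) := by
    intro y hy
    set G := gg α β₁ β₂ y
    set G1 := gg₁ α β₁ β₂ y
    set G2 := gg₂ α β₁ β₂ y
    have hG : 0 < G := hgpos y hy
    have hFv : 0 < G + y * G1 / β₁ := hfpos y hy
    rw [sub_nonneg]
    have hLHS : β₁ * ((G1 + (1 * G1 + y * G2) / β₁) / (G + y * G1 / β₁))
        = (β₁ * G1 + G1 + y * G2) / (G + y * G1 / β₁) := by
      field_simp
      ring
    rw [hLHS, mul_div_assoc' (β₁ + 1) _ _, div_le_div_iff₀ hFv hG]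
    have hkey : β₁ * (G * G2) ≤ (β₁ + 1) * (G1 * G1) := key hα hβ₁ hβ₂ hαβ hy
    have hmul := mul_le_mul_of_nonneg_left hkey (div_nonneg hy hβ₁.le)
    have e1 : (y / β₁) * (β₁ * (G * G2)) = y * (G * G2) := by
      field_simp
    rw [e1] at hmul
    have e2 : (β₁ + 1) * G1 * (G + y * G1 / β₁)
        = (β₁ + 1) * G1 * G + (y / β₁) * ((β₁ + 1) * (G1 * G1)) := by
      field_simp
    rw [e2]
    nlinarith [hmul]
  have hmono : F 0 ≤ F z := by
    have hcont : ContinuousOn F (Set.Icc 0 z) := fun y hy =>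
      ((hDF y hy.1).continuousAt).continuousWithinAt
    have hdiff : DifferentiableOn ℝ F (interior (Set.Icc 0 z)) := by
      rw [interior_Icc]
      exact fun y hy => ((hDF y (le_of_lt hy.1)).differentiableAt).differentiableWithinAt
    have hd : ∀ y ∈ interior (Set.Icc 0 z), 0 ≤ deriv F y := by
      rw [interior_Icc]
      intro y hy
      rw [(hDF y hy.1.le).deriv]
      exact hderiv_nonneg y hy.1.le
    exact monotoneOn_of_deriv_nonneg (convex_Icc 0 z) hcont hdiff hd
      (Set.left_mem_Icc.2 hz.le) (Set.right_mem_Icc.2 hz.le) hz.le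
  have hF0 : F 0 = 0 := by
    rw [hF]
    simp [gg_zero (α := α) (β₁ := β₁) (β₂ := β₂)]
  rw [hF0] at hmono
  rw [hF] at hmono
  simp only [] at hmono
  linarith

end Final
end Wilker

theorem wilker_1F2 (α β₁ β₂ : ℝ) (hα : 0 < α) (hβ₁ : 0 < β₁) (hβ₂ : 0 < β₂)
    (hαβ : β₂ ≤ α) (z : ℝ) (hz : 0 < z) :
    2 ≤ (∑' k : ℕ, (∏ i ∈ Finset.range k, (α + i)) * z ^ k /
          ((∏ i ∈ Finset.range k, (β₁ + 1 + i)) * (∏ i ∈ Finset.range k, (β₂ + i)) *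
            (k.factorial : ℝ))) /
        (∑' k : ℕ, (∏ i ∈ Finset.range k, (α + i)) * z ^ k /
          ((∏ i ∈ Finset.range k, (β₁ + i)) * (∏ i ∈ Finset.range k, (β₂ + i)) *
            (k.factorial : ℝ))) +
      (∑' k : ℕ, (∏ i ∈ Finset.range k, (α + i)) * z ^ k /
          ((∏ i ∈ Finset.range k, (β₁ + 1 + i)) * (∏ i ∈ Finset.range k, (β₂ + i)) *
            (k.factorial : ℝ))) ^ ((1 : ℝ) / β₁) := by
  have hgz : (∑' k : ℕ, (∏ i ∈ Finset.range k, (α + i)) * z ^ k /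
      ((∏ i ∈ Finset.range k, (β₁ + 1 + i)) * (∏ i ∈ Finset.range k, (β₂ + i)) *
        (k.factorial : ℝ))) = Wilker.gg α β₁ β₂ z := by
    rw [Wilker.gg]
    exact tsum_congr fun k => by rw [Wilker.co, div_mul_eq_mul_div]
  have hfz : (∑' k : ℕ, (∏ i ∈ Finset.range k, (α + i)) * z ^ k /
      ((∏ i ∈ Finset.range k, (β₁ + i)) * (∏ i ∈ Finset.range k, (β₂ + i)) *
        (k.factorial : ℝ))) = Wilker.gg α β₁ β₂ z + z * Wilker.gg₁ α β₁ β₂ z / β₁ := by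
    rw [← Wilker.ffval hα hβ₁ hβ₂ hαβ z]
    exact tsum_congr fun k => by rw [Wilker.co, div_mul_eq_mul_div]
  rw [hgz, hfz]
  set G := Wilker.gg α β₁ β₂ z with hG
  set G1 := Wilker.gg₁ α β₁ β₂ z with hG1
  have hG_ge : 1 ≤ G := Wilker.gg_ge_one hα hβ₁ hβ₂ hαβ hz.le
  have hG1nn : 0 ≤ G1 := Wilker.gg₁_nonneg hα hβ₁ hβ₂ hz.le
  have hGpos : 0 < G := by linarith
  have hFv_ge : G ≤ G + z * G1 / β₁ := by
    have : 0 ≤ z * G1 / β₁ := by positivity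
    linarith
  have hFvpos : 0 < G + z * G1 / β₁ := by linarith
  have hlaz := Wilker.lazarevic hα hβ₁ hβ₂ hαβ hz
  rw [← hG, ← hG1] at hlaz
  set Fv := G + z * G1 / β₁ with hFv
  have hlog : Real.log Fv - Real.log G ≤ Real.log G / β₁ := by
    rw [le_div_iff₀ hβ₁]
    have hlogG : 0 ≤ Real.log G := Real.log_nonneg hG_ge
    nlinarith [hlaz]
  have hrpow : Fv / G ≤ G ^ ((1 : ℝ) / β₁) := by
    calc Fv / G = Real.exp (Real.log Fv - Real.log G) := by
          rw [Real.exp_sub, Real.exp_log hFvpos, Real.exp_log hGpos]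
      _ ≤ Real.exp (Real.log G / β₁) := Real.exp_le_exp.2 hlog
      _ = G ^ ((1 : ℝ) / β₁) := by
          rw [Real.rpow_def_of_pos hGpos]
          congr 1
          ring
  have h2 : 2 ≤ G / Fv + Fv / G := by
    rw [div_add_div _ _ (ne_of_gt hFvpos) (ne_of_gt hGpos),
      le_div_iff₀ (mul_pos hFvpos hGpos)]
    nlinarith [sq_nonneg (G - Fv)]
  linarith [hrpow, h2]
end

section
/- Let α_1,…,α_p, β_1,…,β_{p+1} > 0 with α_i ≥ β_{i+1} for i = 1,…,p. Then the function z ↦ ₚF_{p+1}(α_1,…,α_p; β_1,…,β_{p+1}; z) is log-concave on (0, ∞), and satisfies ₚF_{p+1}(z) ≤ exp((α_1⋯α_p)/(β_1⋯β_{p+1}) · z) for all z > 0. -/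
set_option maxHeartbeats 1000000

open Finset

private lemma ratio_pow_le {x y : ℝ} (hx : 0 < x) (hxy : x ≤ y) {i j : ℕ} (hij : i ≤ j) :
    x ^ j * y ^ i ≤ x ^ i * y ^ j := by
  obtain ⟨d, rfl⟩ := Nat.exists_eq_add_of_le hij
  have hy : 0 < y := lt_of_lt_of_le hx hxy
  have h1 : x ^ d ≤ y ^ d := pow_le_pow_left₀ hx.le hxy d
  have h2 : 0 ≤ x ^ i * y ^ i := by positivity
  calc x ^ (i + d) * y ^ i = (x ^ i * y ^ i) * x ^ d := by rw [pow_add]; ring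
    _ ≤ (x ^ i * y ^ i) * y ^ d := by nlinarith
    _ = x ^ i * y ^ (i + d) := by rw [pow_add]; ring

private lemma summable_aux (c : ℕ → ℝ) (hc : ∀ k, 0 < c k) (hr : ∀ k, c k ≤ c 1 ^ k)
    (j : ℕ) (z : ℝ) : Summable (fun k : ℕ => c (k + j) * z ^ k / (k.factorial : ℝ)) := by
  refine Summable.of_norm_bounded
    (Summable.mul_left (c 1 ^ j) (Real.summable_pow_div_factorial (c 1 * |z|))) fun k => ?_
  have hfk : (0:ℝ) < (k.factorial : ℝ) := by exact_mod_cast k.factorial_pos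
  rw [Real.norm_eq_abs, abs_div, abs_mul, abs_pow, abs_of_pos (hc _), Nat.abs_cast]
  calc c (k + j) * |z| ^ k / (k.factorial : ℝ)
      ≤ (c 1 ^ j * c 1 ^ k) * |z| ^ k / (k.factorial : ℝ) := by
        gcongr ?_ * _ / _
        rw [← pow_add]; exact (hr (k+j)).trans (le_of_eq (by rw [Nat.add_comm]))
    _ = c 1 ^ j * ((c 1 * |z|) ^ k / (k.factorial : ℝ)) := by rw [mul_pow]; ring

private lemma deriv_aux (c : ℕ → ℝ) (hc : ∀ k, 0 < c k) (hr : ∀ k, c k ≤ c 1 ^ k) (x : ℝ) :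
    HasDerivAt (fun z : ℝ => ∑' k : ℕ, c k * z ^ k / (k.factorial : ℝ))
      (∑' k : ℕ, c (k + 1) * x ^ k / (k.factorial : ℝ)) x := by
  set R : ℝ := |x| + 1 with hR
  have hR0 : 0 < R := by positivity
  have hxR : x ∈ Set.Ioo (-R) R := Set.mem_Ioo.mpr (abs_lt.mp (lt_add_one |x|))
  set u : ℕ → ℝ := fun n => c n * ((n : ℝ) * R ^ (n - 1)) / (n.factorial : ℝ) with hu
  have hueq : ∀ m : ℕ, c (m + 1) * R ^ m / (m.factorial : ℝ) = u (m + 1) := by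
    intro m
    simp only [hu, Nat.add_sub_cancel, Nat.factorial_succ]
    have h1 : ((m:ℝ) + 1) ≠ 0 := by positivity
    have h2 : (m.factorial : ℝ) ≠ 0 := by exact_mod_cast m.factorial_pos.ne'
    push_cast
    field_simp
  have hu_s : Summable u := by
    rw [← summable_nat_add_iff 1]
    exact (summable_aux c hc hr 1 R).congr hueq
  have hterm : ∀ (n : ℕ) (y : ℝ), y ∈ Set.Ioo (-R) R →
      HasDerivAt (fun w : ℝ => c n * w ^ n / (n.factorial : ℝ))
        (c n * ((n : ℝ) * y ^ (n - 1)) / (n.factorial : ℝ)) y :=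
    fun n y _ => ((hasDerivAt_pow n y).const_mul (c n)).div_const _
  have hbound : ∀ (n : ℕ) (y : ℝ), y ∈ Set.Ioo (-R) R →
      ‖c n * ((n : ℝ) * y ^ (n - 1)) / (n.factorial : ℝ)‖ ≤ u n := by
    intro n y hy
    have hyR : |y| ≤ R := (abs_lt.mpr ⟨hy.1, hy.2⟩).le
    rw [Real.norm_eq_abs, abs_div, abs_mul, abs_mul, abs_pow, abs_of_pos (hc n),
      Nat.abs_cast, Nat.abs_cast]
    simp only [hu]
    gcongr
    exact (hc n).le
  have H := hasDerivAt_tsum_of_isPreconnected hu_s isOpen_Ioo isPreconnected_Ioo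
    hterm hbound (Set.mem_Ioo.mpr ⟨by linarith, hR0⟩)
    (by simpa using summable_aux c hc hr 0 (0:ℝ)) hxR
  have hsd : Summable (fun n : ℕ => c n * ((n : ℝ) * x ^ (n - 1)) / (n.factorial : ℝ)) :=
    Summable.of_norm_bounded hu_s (fun n => hbound n x hxR)
  have e : (∑' n : ℕ, c n * ((n : ℝ) * x ^ (n - 1)) / (n.factorial : ℝ))
      = ∑' k : ℕ, c (k + 1) * x ^ k / (k.factorial : ℝ) := by
    rw [Summable.tsum_eq_zero_add hsd]
    simp only [Nat.cast_zero, zero_mul, mul_zero, zero_div, zero_add]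
    refine tsum_congr fun m => ?_
    simp only [Nat.add_sub_cancel, Nat.factorial_succ]
    have h1 : ((m:ℝ) + 1) ≠ 0 := by positivity
    have h2 : (m.factorial : ℝ) ≠ 0 := by exact_mod_cast m.factorial_pos.ne'
    push_cast
    field_simp
  exact e ▸ H

private lemma tsum_prod_mul (f g : ℕ → ℝ)
    (hfg : Summable (fun q : ℕ × ℕ => f q.1 * g q.2)) (hg : Summable g) :
    ∑' q : ℕ × ℕ, f q.1 * g q.2 = (∑' k, f k) * (∑' k, g k) := by
  have h1 : ∑' q : ℕ × ℕ, f q.1 * g q.2 = ∑' (b) (c2 : ℕ), f b * g c2 :=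
    Summable.tsum_prod' hfg (fun b => hg.mul_left (f b))
  have h2 : ∀ b : ℕ, ∑' c2 : ℕ, f b * g c2 = f b * ∑' c2, g c2 := fun b => tsum_mul_left
  rw [h1, tsum_congr h2, tsum_mul_right]

private lemma key_aux (c : ℕ → ℝ) (hc : ∀ k, 0 < c k) (hr : ∀ k, c k ≤ c 1 ^ k)
    (hlc : ∀ i j : ℕ, i ≤ j → c i * c (j + 1) ≤ c (i + 1) * c j)
    {x y : ℝ} (hx : 0 < x) (hxy : x ≤ y) :
    (∑' k : ℕ, c (k + 1) * y ^ k / (k.factorial : ℝ)) *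
      (∑' k : ℕ, c k * x ^ k / (k.factorial : ℝ)) ≤
    (∑' k : ℕ, c (k + 1) * x ^ k / (k.factorial : ℝ)) *
      (∑' k : ℕ, c k * y ^ k / (k.factorial : ℝ)) := by
  have hy : 0 < y := lt_of_lt_of_le hx hxy
  have hs0x : Summable (fun k : ℕ => c k * x ^ k / (k.factorial : ℝ)) := by
    simpa using summable_aux c hc hr 0 x
  have hs0y : Summable (fun k : ℕ => c k * y ^ k / (k.factorial : ℝ)) := by
    simpa using summable_aux c hc hr 0 y
  have hs1x : Summable (fun k : ℕ => c (k + 1) * x ^ k / (k.factorial : ℝ)) :=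
    summable_aux c hc hr 1 x
  have hs1y : Summable (fun k : ℕ => c (k + 1) * y ^ k / (k.factorial : ℝ)) :=
    summable_aux c hc hr 1 y
  have hnn : ∀ (j : ℕ) (z : ℝ), 0 < z → ∀ k : ℕ, 0 ≤ c (k + j) * z ^ k / (k.factorial : ℝ) :=
    fun j z hz k => div_nonneg (mul_nonneg (hc _).le (pow_nonneg hz.le k)) (Nat.cast_nonneg _)
  have SA : Summable (fun q : ℕ × ℕ =>
      (c (q.1 + 1) * y ^ q.1 / (q.1.factorial : ℝ)) * (c q.2 * x ^ q.2 / (q.2.factorial : ℝ))) :=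
    hs1y.mul_of_nonneg hs0x (fun k => by simpa using hnn 1 y hy k)
      (fun k => by simpa using hnn 0 x hx k)
  have SB : Summable (fun q : ℕ × ℕ =>
      (c (q.1 + 1) * x ^ q.1 / (q.1.factorial : ℝ)) * (c q.2 * y ^ q.2 / (q.2.factorial : ℝ))) :=
    hs1x.mul_of_nonneg hs0y (fun k => by simpa using hnn 1 x hx k)
      (fun k => by simpa using hnn 0 y hy k)
  have hAt := tsum_prod_mul (fun k => c (k + 1) * y ^ k / (k.factorial : ℝ))
    (fun k => c k * x ^ k / (k.factorial : ℝ)) SA hs0x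
  have hBt := tsum_prod_mul (fun k => c (k + 1) * x ^ k / (k.factorial : ℝ))
    (fun k => c k * y ^ k / (k.factorial : ℝ)) SB hs0y
  rw [← hAt, ← hBt]
  have ST : Summable (fun q : ℕ × ℕ =>
      (c (q.1 + 1) * x ^ q.1 / (q.1.factorial : ℝ)) * (c q.2 * y ^ q.2 / (q.2.factorial : ℝ)) -
      (c (q.1 + 1) * y ^ q.1 / (q.1.factorial : ℝ)) * (c q.2 * x ^ q.2 / (q.2.factorial : ℝ))) :=
    SB.sub SA
  have STs : Summable (fun q : ℕ × ℕ =>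
      (c (q.2 + 1) * x ^ q.2 / (q.2.factorial : ℝ)) * (c q.1 * y ^ q.1 / (q.1.factorial : ℝ)) -
      (c (q.2 + 1) * y ^ q.2 / (q.2.factorial : ℝ)) * (c q.1 * x ^ q.1 / (q.1.factorial : ℝ))) :=
    (Equiv.prodComm ℕ ℕ).summable_iff.mpr ST
  have hswap : ∀ q : ℕ × ℕ, 0 ≤
      ((c (q.1 + 1) * x ^ q.1 / (q.1.factorial : ℝ)) * (c q.2 * y ^ q.2 / (q.2.factorial : ℝ)) -
       (c (q.1 + 1) * y ^ q.1 / (q.1.factorial : ℝ)) * (c q.2 * x ^ q.2 / (q.2.factorial : ℝ))) +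
      ((c (q.2 + 1) * x ^ q.2 / (q.2.factorial : ℝ)) * (c q.1 * y ^ q.1 / (q.1.factorial : ℝ)) -
       (c (q.2 + 1) * y ^ q.2 / (q.2.factorial : ℝ)) * (c q.1 * x ^ q.1 / (q.1.factorial : ℝ))) := by
    rintro ⟨i, j⟩
    have hfi : (0:ℝ) < (i.factorial : ℝ) := by exact_mod_cast i.factorial_pos
    have hfj : (0:ℝ) < (j.factorial : ℝ) := by exact_mod_cast j.factorial_pos
    have heq :
        ((c (i + 1) * x ^ i / (i.factorial : ℝ)) * (c j * y ^ j / (j.factorial : ℝ)) -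
         (c (i + 1) * y ^ i / (i.factorial : ℝ)) * (c j * x ^ j / (j.factorial : ℝ))) +
        ((c (j + 1) * x ^ j / (j.factorial : ℝ)) * (c i * y ^ i / (i.factorial : ℝ)) -
         (c (j + 1) * y ^ j / (j.factorial : ℝ)) * (c i * x ^ i / (i.factorial : ℝ))) =
        ((c (i + 1) * c j - c (j + 1) * c i) * (x ^ i * y ^ j - x ^ j * y ^ i)) /
          ((i.factorial : ℝ) * (j.factorial : ℝ)) := by
      field_simp
      ring
    simp only []
    rw [heq]
    rcases le_total i j with h | h
    · have h1 : 0 ≤ c (i + 1) * c j - c (j + 1) * c i := by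
        have := hlc i j h; nlinarith
      have h2 : 0 ≤ x ^ i * y ^ j - x ^ j * y ^ i :=
        sub_nonneg.2 (ratio_pow_le hx hxy h)
      positivity
    · have h1 : c (i + 1) * c j - c (j + 1) * c i ≤ 0 := by
        have := hlc j i h; nlinarith
      have h2 : x ^ i * y ^ j - x ^ j * y ^ i ≤ 0 :=
        sub_nonpos.2 (ratio_pow_le hx hxy h)
      have hm : 0 ≤ (c (i + 1) * c j - c (j + 1) * c i) * (x ^ i * y ^ j - x ^ j * y ^ i) := by
        nlinarith
      positivity
  have h2T := tsum_nonneg (L := SummationFilter.unconditional _) hswap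
  rw [Summable.tsum_add ST STs] at h2T
  have hse : (∑' q : ℕ × ℕ,
      ((c (q.2 + 1) * x ^ q.2 / (q.2.factorial : ℝ)) * (c q.1 * y ^ q.1 / (q.1.factorial : ℝ)) -
       (c (q.2 + 1) * y ^ q.2 / (q.2.factorial : ℝ)) * (c q.1 * x ^ q.1 / (q.1.factorial : ℝ)))) =
      ∑' q : ℕ × ℕ,
      ((c (q.1 + 1) * x ^ q.1 / (q.1.factorial : ℝ)) * (c q.2 * y ^ q.2 / (q.2.factorial : ℝ)) -
       (c (q.1 + 1) * y ^ q.1 / (q.1.factorial : ℝ)) * (c q.2 * x ^ q.2 / (q.2.factorial : ℝ))) :=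
    (Equiv.prodComm ℕ ℕ).tsum_eq (fun q : ℕ × ℕ =>
      (c (q.1 + 1) * x ^ q.1 / (q.1.factorial : ℝ)) * (c q.2 * y ^ q.2 / (q.2.factorial : ℝ)) -
      (c (q.1 + 1) * y ^ q.1 / (q.1.factorial : ℝ)) * (c q.2 * x ^ q.2 / (q.2.factorial : ℝ)))
  rw [hse] at h2T
  have h3 := Summable.tsum_sub SB SA
  linarith [h2T, h3.le, h3.symm.le]

private lemma logconcave_series (c : ℕ → ℝ) (hc : ∀ k, 0 < c k) (h1 : c 0 = 1)
    (hlc : ∀ i j : ℕ, i ≤ j → c i * c (j + 1) ≤ c (i + 1) * c j) :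
    ConcaveOn ℝ (Set.Ioi 0) (fun z : ℝ =>
      Real.log (∑' k : ℕ, c k * z ^ k / (k.factorial : ℝ))) ∧
    ∀ z : ℝ, 0 < z →
      (∑' k : ℕ, c k * z ^ k / (k.factorial : ℝ)) ≤ Real.exp (c 1 * z) := by
  have hc1 : 0 < c 1 := hc 1
  have hr : ∀ k, c k ≤ c 1 ^ k := by
    intro k; induction k with
    | zero => simp [h1]
    | succ k ih =>
      have h := hlc 0 k (Nat.zero_le k)
      rw [h1, one_mul] at h
      calc c (k + 1) ≤ c 1 * c k := h
        _ ≤ c 1 * c 1 ^ k := by nlinarith [(hc k).le]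
        _ = c 1 ^ (k + 1) := by ring
  have hs0 : ∀ z : ℝ, Summable (fun k : ℕ => c k * z ^ k / (k.factorial : ℝ)) := by
    intro z; simpa using summable_aux c hc hr 0 z
  set f : ℝ → ℝ := fun z => ∑' k : ℕ, c k * z ^ k / (k.factorial : ℝ) with hfdef
  set g : ℝ → ℝ := fun z => ∑' k : ℕ, c (k + 1) * z ^ k / (k.factorial : ℝ) with hgdef
  have hfpos : ∀ z : ℝ, 0 ≤ z → 0 < f z := by
    intro z hz
    have h0 : c 0 * z ^ 0 / ((0:ℕ).factorial : ℝ) ≤ f z :=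
      Summable.le_tsum (hs0 z) 0 (fun k _ =>
        div_nonneg (mul_nonneg (hc k).le (pow_nonneg hz k)) (Nat.cast_nonneg _))
    simp only [pow_zero, Nat.factorial_zero, Nat.cast_one, mul_one, div_one, h1] at h0
    linarith
  have hderiv : ∀ x : ℝ, HasDerivAt f (g x) x := fun x => deriv_aux c hc hr x
  constructor
  · apply AntitoneOn.concaveOn_of_deriv (convex_Ioi 0)
    · intro z hz
      exact ((hderiv z).continuousAt.log (hfpos z (le_of_lt hz)).ne').continuousWithinAt
    · rw [interior_Ioi]
      intro z hz
      exact ((hderiv z).log (hfpos z (le_of_lt hz)).ne').differentiableAt.differentiableWithinAt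
    · rw [interior_Ioi]
      intro x hx y hy hxy
      rw [((hderiv x).log (hfpos x (le_of_lt hx)).ne').deriv,
        ((hderiv y).log (hfpos y (le_of_lt hy)).ne').deriv]
      rw [div_le_div_iff₀ (hfpos y (le_of_lt hy)) (hfpos x (le_of_lt hx))]
      exact key_aux c hc hr hlc hx hxy
  · intro z hz
    have hexp : Real.exp (c 1 * z) = ∑' n : ℕ, (c 1 * z) ^ n / (n.factorial : ℝ) := by
      rw [Real.exp_eq_exp_ℝ, NormedSpace.exp_eq_tsum_div]
    rw [hexp]
    apply Summable.tsum_le_tsum _ (hs0 z) (Real.summable_pow_div_factorial _)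
    intro k
    rw [mul_pow]
    have hfk : (0:ℝ) < (k.factorial : ℝ) := by exact_mod_cast k.factorial_pos
    gcongr ?_ * _ / _
    exact hr k

theorem pFq_logConcave (p : ℕ) (α : Fin p → ℝ) (β : Fin (p + 1) → ℝ)
    (hα : ∀ i, 0 < α i) (hβ : ∀ j, 0 < β j) (hαβ : ∀ i : Fin p, β i.succ ≤ α i) :
    ConcaveOn ℝ (Set.Ioi 0) (fun z : ℝ =>
      Real.log (∑' k : ℕ, (∏ i, ∏ m ∈ Finset.range k, (α i + m)) /
        (∏ j, ∏ m ∈ Finset.range k, (β j + m)) * z ^ k / (k.factorial : ℝ))) ∧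
    ∀ z : ℝ, 0 < z →
      (∑' k : ℕ, (∏ i, ∏ m ∈ Finset.range k, (α i + m)) /
          (∏ j, ∏ m ∈ Finset.range k, (β j + m)) * z ^ k / (k.factorial : ℝ)) ≤
        Real.exp ((∏ i, α i) / (∏ j, β j) * z) := by
  set c : ℕ → ℝ := fun k => (∏ i, ∏ m ∈ Finset.range k, (α i + (m:ℝ))) /
    (∏ j, ∏ m ∈ Finset.range k, (β j + (m:ℝ))) with hcdef
  have hP : ∀ k, 0 < ∏ i, ∏ m ∈ Finset.range k, (α i + (m:ℝ)) := by
    intro k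
    refine Finset.prod_pos fun i _ => Finset.prod_pos fun m _ => ?_
    have := hα i; positivity
  have hQ : ∀ k, 0 < ∏ j, ∏ m ∈ Finset.range k, (β j + (m:ℝ)) := by
    intro k
    refine Finset.prod_pos fun j _ => Finset.prod_pos fun m _ => ?_
    have := hβ j; positivity
  have hc : ∀ k, 0 < c k := fun k => div_pos (hP k) (hQ k)
  have h1 : c 0 = 1 := by simp [hcdef]
  have hPs : ∀ k, (∏ i, ∏ m ∈ Finset.range (k+1), (α i + (m:ℝ)))
      = (∏ i, ∏ m ∈ Finset.range k, (α i + (m:ℝ))) * ∏ i, (α i + (k:ℝ)) := by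
    intro k
    simp [Finset.prod_range_succ, Finset.prod_mul_distrib]
  have hQs : ∀ k, (∏ j, ∏ m ∈ Finset.range (k+1), (β j + (m:ℝ)))
      = (∏ j, ∏ m ∈ Finset.range k, (β j + (m:ℝ))) * ∏ j, (β j + (k:ℝ)) := by
    intro k
    simp [Finset.prod_range_succ, Finset.prod_mul_distrib]
  have hAB : ∀ i j : ℕ, i ≤ j →
      (∏ t, (α t + (j:ℝ))) * ∏ t, (β t + (i:ℝ)) ≤
      (∏ t, (α t + (i:ℝ))) * ∏ t, (β t + (j:ℝ)) := by
    intro i j hij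
    have hij' : (i:ℝ) ≤ (j:ℝ) := by exact_mod_cast hij
    rw [Fin.prod_univ_succ fun t => β t + (i:ℝ), Fin.prod_univ_succ fun t => β t + (j:ℝ)]
    have hfac : ∀ t : Fin p, (α t + (j:ℝ)) * (β t.succ + (i:ℝ))
        ≤ (α t + (i:ℝ)) * (β t.succ + (j:ℝ)) := by
      intro t
      have h1 := hαβ t
      nlinarith
    have hprod : ∏ t : Fin p, ((α t + (j:ℝ)) * (β t.succ + (i:ℝ)))
        ≤ ∏ t : Fin p, ((α t + (i:ℝ)) * (β t.succ + (j:ℝ))) := by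
      refine Finset.prod_le_prod (fun t _ => ?_) (fun t _ => hfac t)
      have h2 := hα t
      have h3 := hβ t.succ
      have h4 : (0:ℝ) ≤ (i:ℝ) := Nat.cast_nonneg i
      positivity
    calc (∏ t, (α t + (j:ℝ))) * ((β 0 + (i:ℝ)) * ∏ t : Fin p, (β t.succ + (i:ℝ)))
        = (β 0 + (i:ℝ)) * ∏ t : Fin p, ((α t + (j:ℝ)) * (β t.succ + (i:ℝ))) := by
          rw [Finset.prod_mul_distrib]; ring
      _ ≤ (β 0 + (j:ℝ)) * ∏ t : Fin p, ((α t + (i:ℝ)) * (β t.succ + (j:ℝ))) := by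
          apply mul_le_mul (by linarith) hprod
          · refine Finset.prod_nonneg fun t _ => ?_
            have h2 := hα t
            have h3 := hβ t.succ
            have h4 : (0:ℝ) ≤ (i:ℝ) := Nat.cast_nonneg i
            positivity
          · have h3 := hβ 0
            have h4 : (0:ℝ) ≤ (j:ℝ) := Nat.cast_nonneg j
            positivity
      _ = (∏ t, (α t + (i:ℝ))) * ((β 0 + (j:ℝ)) * ∏ t : Fin p, (β t.succ + (j:ℝ))) := by
          rw [Finset.prod_mul_distrib]; ring
  have hlc : ∀ i j : ℕ, i ≤ j → c i * c (j + 1) ≤ c (i + 1) * c j := by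
    intro i j hij
    simp only [hcdef]
    rw [div_mul_div_comm, div_mul_div_comm, div_le_div_iff₀
      (mul_pos (hQ i) (hQ (j+1))) (mul_pos (hQ (i+1)) (hQ j))]
    rw [hPs i, hPs j, hQs i, hQs j]
    have hkey := hAB i j hij
    have base : (0:ℝ) ≤ (∏ t, ∏ m ∈ Finset.range i, (α t + (m:ℝ))) *
        (∏ t, ∏ m ∈ Finset.range j, (α t + (m:ℝ))) *
        ((∏ t, ∏ m ∈ Finset.range i, (β t + (m:ℝ))) *
         (∏ t, ∏ m ∈ Finset.range j, (β t + (m:ℝ)))) :=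
      mul_nonneg (mul_nonneg (hP i).le (hP j).le) (mul_nonneg (hQ i).le (hQ j).le)
    nlinarith [mul_le_mul_of_nonneg_left hkey base]
  obtain ⟨H1, H2⟩ := logconcave_series c hc h1 hlc
  have hc1 : c 1 = (∏ i, α i) / (∏ j, β j) := by
    simp [hcdef, Finset.prod_range_one]
  constructor
  · exact H1
  · intro z hz
    have h := H2 z hz
    rwa [hc1] at h
end
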